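/- For θ > 0 and λ ∈ (0,1), the mean of the generalized Poisson distribution is θ/(1-λ): ∑_{n=0}^∞ n · θ(θ+λn)^{n-1}/n! · e^{-(θ+λn)} = θ/(1-λ). -/

import Mathlib

open Finset
open scoped ENNReal NNReal

noncomputable def D (n d : ℕ) (a : ℝ) : ℝ := ∑ k ∈ range (n+1), (-1:ℝ)^k * (n.choose k) * (a + k)^d

lemma D_rec (n d : ℕ) (a : ℝ) : D (n+1) d a = D n d a - D n d (a+1) := by
  have h2 : ∑ i ∈ range (n + 1), (-(1:ℝ)) * ((-1) ^ i * (n.choose i) * (a + (i+1:ℕ)) ^ d)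
      = - D n d (a+1) := by
    unfold D
    rw [← Finset.mul_sum, neg_one_mul, neg_inj]
    refine Finset.sum_congr rfl fun i _ => ?_
    push_cast
    ring_nf
  have h3 : (∑ i ∈ range (n + 1), (-1:ℝ) ^ (i+1) * (n.choose (i+1)) * (a + (i+1:ℕ)) ^ d)
      + (-1:ℝ) ^ 0 * ((n+1).choose 0) * (a + (0:ℕ)) ^ d = D n d a := by
    unfold D
    rw [Finset.sum_range_succ]
    rw [Finset.sum_range_succ' (fun k => (-1:ℝ) ^ k * (n.choose k) * (a + k) ^ d) n]
    simp [Nat.choose_succ_self]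
  have h1 : ∀ i ∈ range (n + 1), (-1:ℝ) ^ (i+1) * ((n+1).choose (i+1)) * (a + (i+1:ℕ)) ^ d
      = ((-1) ^ (i+1) * (n.choose (i+1)) * (a + (i+1:ℕ)) ^ d)
        + (-(1:ℝ)) * ((-1) ^ i * (n.choose i) * (a + (i+1:ℕ)) ^ d) := by
    intro i _
    rw [Nat.choose_succ_succ]
    push_cast
    ring
  conv_lhs => rw [D]
  rw [Finset.sum_range_succ' (fun k => (-1:ℝ) ^ k * ((n+1).choose k) * (a + k) ^ d) (n+1),
    Finset.sum_congr rfl h1, Finset.sum_add_distrib, h2, add_right_comm, h3]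
  ring

lemma D_eval (n : ℕ) : (∀ d, d < n → ∀ a : ℝ, D n d a = 0)
    ∧ (∀ a : ℝ, D n n a = (-1)^n * n.factorial) := by
  induction n with
  | zero =>
    refine ⟨by omega, fun a => by simp [D]⟩
  | succ n ih =>
    obtain ⟨ih1, ih2⟩ := ih
    have claim1 : ∀ d, d < n + 1 → ∀ a : ℝ, D (n+1) d a = 0 := by
      intro d hd a
      rw [D_rec]
      rcases Nat.lt_or_ge d n with h | h
      · rw [ih1 d h, ih1 d h, sub_self]
      · have hdn : d = n := by omega
        subst hdn
        rw [ih2, ih2, sub_self]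
    refine ⟨claim1, fun a => ?_⟩
    have expand : D n (n+1) (a+1) = ∑ j ∈ range (n+2), ((n+1).choose j : ℝ) * D n j a := by
      unfold D
      have step : ∀ k ∈ range (n+1), (-1:ℝ) ^ k * (n.choose k) * (a + 1 + k) ^ (n+1)
          = ∑ j ∈ range (n+2), (-1:ℝ) ^ k * (n.choose k) * (a + k) ^ j * 1 ^ (n + 1 - j)
            * ((n+1).choose j) := by
        intro k _
        have : (a + 1 + (k:ℝ)) = (a + k) + 1 := by ring
        rw [this, add_pow, Finset.mul_sum]
        refine Finset.sum_congr rfl fun j _ => ?_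
        ring
      rw [Finset.sum_congr rfl step, Finset.sum_comm]
      refine Finset.sum_congr rfl fun j _ => ?_
      rw [Finset.mul_sum]
      refine Finset.sum_congr rfl fun k _ => ?_
      rw [one_pow]
      ring
    rw [D_rec, expand, Finset.sum_range_succ, Finset.sum_range_succ,
      Finset.sum_eq_zero (fun j hj => by
        rw [ih1 j (Finset.mem_range.mp hj), mul_zero]),
      ih2, Nat.choose_succ_self_right, Nat.choose_self]
    push_cast [Nat.factorial_succ]
    ring

lemma coeff_one (N : ℕ) (c : ℝ) :
    ∑ m ∈ range (N+1), (c+m)^m * (-(c+m))^(N-m) / (m.factorial * (N-m).factorial) = 1 := by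
  have key : ∀ m ∈ range (N+1), (c+m)^m * (-(c+m))^(N-m) / (m.factorial * (N-m).factorial)
      = (-1:ℝ)^N / N.factorial * ((-1)^m * (N.choose m) * (c+m)^N) := by
    intro m hm
    have hmN : m ≤ N := Nat.lt_succ_iff.mp (mem_range.mp hm)
    have hfac : (N.factorial : ℝ) = (N.choose m) * m.factorial * (N-m).factorial := by
      exact_mod_cast (Nat.choose_mul_factorial_mul_factorial hmN).symm
    have e1 : (-(c+m))^(N-m) = (-1:ℝ)^(N-m) * (c+m)^(N-m) := by
      rw [neg_pow]
    have e2 : (c+m)^m * (c+m)^(N-m) = (c+m)^N := by rw [← pow_add]; congr 1; omega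
    have e3 : (-1:ℝ)^N = (-1)^m * (-1)^(N-m) := by rw [← pow_add]; congr 1; omega
    have h1 : (m.factorial : ℝ) ≠ 0 := Nat.cast_ne_zero.mpr m.factorial_ne_zero
    have h2 : ((N-m).factorial : ℝ) ≠ 0 := Nat.cast_ne_zero.mpr (N-m).factorial_ne_zero
    have h3 : ((N.choose m) : ℝ) ≠ 0 :=
      Nat.cast_ne_zero.mpr (Nat.choose_pos hmN).ne'
    rw [e1, e3, hfac]
    have h6 : (-1:ℝ)^m * (-1)^m = 1 := by rw [← mul_pow]; norm_num
    field_simp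
    linear_combination e2 - (c+m)^N * h6
  rw [Finset.sum_congr rfl key, ← Finset.mul_sum]
  have hD : ∑ m ∈ range (N+1), ((-1:ℝ)^m * (N.choose m) * (c+m)^N) = D N N c := rfl
  rw [hD, (D_eval N).2 c]
  have h4 : (-1:ℝ)^N * (-1)^N = 1 := by rw [← mul_pow]; norm_num
  have h5 : (N.factorial : ℝ) ≠ 0 := Nat.cast_ne_zero.mpr N.factorial_ne_zero
  field_simp
  linear_combination h4

lemma real_exp_tsum (x : ℝ) : Real.exp x = ∑' n : ℕ, x^n / n.factorial := by
  rw [Real.exp_eq_exp_ℝ]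
  exact (NormedSpace.expSeries_div_hasSum_exp x).tsum_eq.symm

lemma exp_term_le (x : ℝ) (hx : 0 ≤ x) (m : ℕ) : x^m / m.factorial ≤ Real.exp x := by
  rw [real_exp_tsum x]
  exact Summable.le_tsum (Real.summable_pow_div_factorial x) m (fun k _ => by positivity)

lemma boundB (c : ℝ) (hc : 0 ≤ c) (m : ℕ) :
    (c+m)^m / m.factorial ≤ Real.exp c * Real.exp m := by
  rw [← Real.exp_add]
  exact exp_term_le _ (by positivity) m

lemma summable_main (c : ℝ) (hc : 0 ≤ c) (r : ℝ) (hr0 : 0 ≤ r) (hr : Real.exp 1 * r < 1) :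
    Summable (fun m : ℕ => (c+m)^m / m.factorial * r^m) := by
  have hcm : ∀ m : ℕ, (0:ℝ) ≤ c + m := fun m => add_nonneg hc (Nat.cast_nonneg m)
  refine Summable.of_nonneg_of_le (fun m => ?_) (fun m => ?_)
    ((summable_geometric_of_lt_one (by positivity) hr).mul_left (Real.exp c))
  · have := hcm m
    positivity
  · have h1 : (c+m)^m / m.factorial * r^m ≤ (Real.exp c * Real.exp m) * r^m :=
      mul_le_mul_of_nonneg_right (boundB c hc m) (by positivity)
    refine h1.trans (le_of_eq ?_)
    have h2 : Real.exp m = (Real.exp 1)^m := by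
      rw [← Real.exp_nat_mul]; norm_num
    rw [h2, mul_pow, mul_assoc]

lemma small (c l : ℝ) (hc : 0 < c) (hl0 : 0 < l) (hl8 : l ≤ 1/8) :
    ∑' m : ℕ, (c+m)^m / m.factorial * (l * Real.exp (-l))^m = Real.exp (c*l) / (1-l) := by
  have hcm : ∀ m : ℕ, (0:ℝ) ≤ c + m := fun m => add_nonneg hc.le (Nat.cast_nonneg m)
  obtain ⟨f, hf_def⟩ : ∃ f : ℕ × ℕ → ℝ, f =
      fun p => (c+p.1)^p.1 * l^p.1 / p.1.factorial * ((-(c+p.1)*l)^p.2 / p.2.factorial) := ⟨_, rfl⟩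
  obtain ⟨F, hF_def⟩ : ∃ F : ℕ × ℕ → ℝ, F =
      fun p => (c+p.1)^p.1 * l^p.1 / p.1.factorial * (((c+p.1)*l)^p.2 / p.2.factorial) := ⟨_, rfl⟩
  have hFnonneg : ∀ p, 0 ≤ F p := by
    intro p
    have := hcm p.1
    simp only [hF_def]
    positivity
  have habs_le : ∀ p, ‖f p‖ ≤ F p := by
    intro ⟨m, k⟩
    have h1 : (0:ℝ) ≤ (c+m)^m * l^m / m.factorial := by have := hcm m; positivity
    simp only [hf_def, hF_def, Real.norm_eq_abs]
    rw [abs_mul, abs_of_nonneg h1, abs_div, abs_pow, abs_mul, abs_neg,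
      abs_of_nonneg (hcm m), abs_of_nonneg hl0.le, Nat.abs_cast]
  have hexp2 : Real.exp 1 * (l * Real.exp l) < 1 := by
    have h1 : Real.exp l ≤ Real.exp 1 := Real.exp_le_exp.mpr (by linarith)
    have h2 : Real.exp 1 < 2.7182818286 := Real.exp_one_lt_d9
    have h3 : 0 < Real.exp l := Real.exp_pos l
    have h4 : l * Real.exp l ≤ (1/8) * Real.exp 1 := mul_le_mul hl8 h1 h3.le (by norm_num)
    have h5 : Real.exp 1 * (l * Real.exp l) ≤ Real.exp 1 * ((1/8) * Real.exp 1) :=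
      mul_le_mul_of_nonneg_left h4 (Real.exp_pos 1).le
    nlinarith [Real.exp_pos 1]
  have hrowsum : ∀ m : ℕ, ∑' k, F (m, k)
      = Real.exp (c*l) * ((c+m)^m / m.factorial * (l * Real.exp l)^m) := by
    intro m
    simp only [hF_def]
    rw [tsum_mul_left, ← real_exp_tsum ((c+m)*l), mul_pow, ← Real.exp_nat_mul,
      show ((c:ℝ)+m)*l = c*l + l*m by ring, Real.exp_add]
    ring_nf
  have hFsum : Summable F := by
    refine (summable_prod_of_nonneg hFnonneg).mpr ⟨fun m => ?_, ?_⟩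
    · simp only [hF_def]
      exact (Real.summable_pow_div_factorial ((c+m)*l)).mul_left _
    · simp only [hrowsum]
      exact (summable_main c hc.le (l * Real.exp l) (by positivity) hexp2).mul_left _
  have hsum : Summable f := hFsum.of_norm_bounded habs_le
  have hrow : ∀ m : ℕ, Summable (fun k => f (m, k)) := by
    intro m
    simp only [hf_def]
    exact (Real.summable_pow_div_factorial (-(c+m)*l)).mul_left _
  have hdiag : ∀ n : ℕ, ∑ p ∈ antidiagonal n, f p = l^n := by
    intro n
    rw [Finset.Nat.sum_antidiagonal_eq_sum_range_succ_mk]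
    have hterm : ∀ m ∈ range (n+1), f (m, n-m)
        = l^n * ((c+m)^m * (-(c+m))^(n-m) / (m.factorial * (n-m).factorial)) := by
      intro m hm
      have hmn : m ≤ n := Nat.lt_succ_iff.mp (mem_range.mp hm)
      have hl : l^m * l^(n-m) = l^n := by rw [← pow_add]; congr 1; omega
      simp only [hf_def]
      rw [show (-((c:ℝ)+m)*l) = (-(c+m))*l by ring, mul_pow]
      rw [← hl]
      ring
    rw [Finset.sum_congr rfl hterm, ← Finset.mul_sum, coeff_one n c, mul_one]
  have chain : ∑' m : ℕ, ((c+m)^m * l^m / m.factorial * Real.exp (-(c+m)*l)) = (1-l)⁻¹ := by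
    have key1 : ∀ m : ℕ, (c+m)^m * l^m / m.factorial * Real.exp (-(c+m)*l) = ∑' k, f (m, k) := by
      intro m
      simp only [hf_def]
      rw [tsum_mul_left, ← real_exp_tsum (-(c+m)*l)]
    calc ∑' m : ℕ, ((c+m)^m * l^m / m.factorial * Real.exp (-(c+m)*l))
        = ∑' (m : ℕ) (k : ℕ), f (m, k) := tsum_congr key1
      _ = ∑' p : ℕ × ℕ, f p := (Summable.tsum_prod' hsum hrow).symm
      _ = ∑' σ : Σ n : ℕ, ↥(antidiagonal n), f (Finset.HasAntidiagonal.sigmaAntidiagonalEquivProd σ) :=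
          ((Finset.HasAntidiagonal.sigmaAntidiagonalEquivProd (A := ℕ)).tsum_eq f).symm
      _ = ∑' (n : ℕ) (p : ↥(antidiagonal n)), f ↑p :=
          Summable.tsum_sigma' (fun n => (hasSum_fintype _).summable)
            ((Finset.HasAntidiagonal.sigmaAntidiagonalEquivProd (A := ℕ)).summable_iff.mpr hsum)
      _ = ∑' n : ℕ, l^n := by
          refine tsum_congr fun n => ?_
          rw [Finset.tsum_subtype (antidiagonal n) f, hdiag n]
      _ = (1-l)⁻¹ := tsum_geometric_of_lt_one hl0.le (by linarith)
  have key2 : ∀ m : ℕ, (c+m)^m * l^m / m.factorial * Real.exp (-(c+m)*l)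
      = Real.exp (-(c*l)) * ((c+m)^m / m.factorial * (l * Real.exp (-l))^m) := by
    intro m
    rw [mul_pow, ← Real.exp_nat_mul,
      show (-((c:ℝ)+m)*l) = -(c*l) + (m:ℝ)*(-l) by ring, Real.exp_add]
    ring
  rw [tsum_congr key2, tsum_mul_left, Real.exp_neg] at chain
  have hSeq : (∑' m : ℕ, (c+m)^m / m.factorial * (l * Real.exp (-l))^m)
      = Real.exp (c*l) * (1-l)⁻¹ := by
    rw [← chain, ← mul_assoc, mul_inv_cancel₀ (Real.exp_ne_zero _), one_mul]
  rw [hSeq, div_eq_mul_inv]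

lemma core (c l : ℝ) (hc : 0 < c) (hl : l ∈ Set.Ioo (0:ℝ) 1) :
    ∑' m : ℕ, (c+m)^m / m.factorial * (l * Real.exp (-l))^m = Real.exp (c*l) / (1-l) := by
  set a : ℕ → ℝ := fun m => (c+m)^m / m.factorial with ha_def
  set p := FormalMultilinearSeries.ofScalars ℝ a with hp_def
  have hcm : ∀ m : ℕ, (0:ℝ) ≤ c + m := fun m => add_nonneg hc.le (Nat.cast_nonneg m)
  have ha_nonneg : ∀ m, 0 ≤ a m := by
    intro m; have := hcm m; simp only [ha_def]; positivity
  have hnorm : ∀ n, ‖p n‖ = a n := by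
    intro n
    rw [hp_def, FormalMultilinearSeries.ofScalars_norm, Real.norm_eq_abs,
      abs_of_nonneg (ha_nonneg n)]
  have hrad : ∀ r : NNReal, Real.exp 1 * r < 1 → (r : ℝ≥0∞) ≤ p.radius := by
    intro r hr
    apply p.le_radius_of_summable
    have : (fun n : ℕ => ‖p n‖ * (r:ℝ)^n) = fun n : ℕ => a n * (r:ℝ)^n := by
      funext n; rw [hnorm]
    rw [this]
    exact summable_main c hc.le r r.coe_nonneg hr
  have hrad_pos : 0 < p.radius := by
    refine lt_of_lt_of_le ?_ (hrad (1/4 : NNReal) ?_)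
    · norm_num
    · push_cast
      nlinarith [Real.exp_one_lt_d9]
  have hsum_analytic : ∀ x : ℝ, |x| < Real.exp (-1) → AnalyticAt ℝ p.sum x := by
    intro x hx
    have hexp1 : (0:ℝ) < Real.exp (-1) := Real.exp_pos _
    set r : NNReal := Real.toNNReal ((|x| + Real.exp (-1))/2) with hr_def
    have hxr : |x| < (r : ℝ) := by
      rw [hr_def, Real.coe_toNNReal _ (by positivity)]
      linarith [abs_nonneg x]
    have hrlt : (r : ℝ) < Real.exp (-1) := by
      rw [hr_def, Real.coe_toNNReal _ (by positivity)]
      linarith [abs_nonneg x]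
    have hre : Real.exp 1 * r < 1 := by
      have h := mul_lt_mul_of_pos_left hrlt (Real.exp_pos 1)
      rwa [← Real.exp_add, add_neg_cancel, Real.exp_zero] at h
    refine (p.hasFPowerSeriesOnBall hrad_pos).analyticAt_of_mem ?_
    rw [EMetric.mem_ball, edist_zero_right]
    calc (‖x‖₊ : ℝ≥0∞) < (r : ℝ≥0∞) := by
          rw [ENNReal.coe_lt_coe, ← NNReal.coe_lt_coe, coe_nnnorm, Real.norm_eq_abs]
          exact hxr
      _ ≤ p.radius := hrad r hre
  have hmap : ∀ x : ℝ, 0 < x → x < 1 → |x * Real.exp (-x)| < Real.exp (-1) := by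
    intro x hx0 hx1
    have h1 : x < Real.exp (x - 1) := by
      have := Real.add_one_lt_exp (x := x - 1) (by intro h; apply absurd h; intro h'; linarith [h'])
      linarith
    have h2 : x * Real.exp (-x) < Real.exp (x-1) * Real.exp (-x) :=
      mul_lt_mul_of_pos_right h1 (Real.exp_pos _)
    rw [← Real.exp_add] at h2
    rw [abs_of_nonneg (by positivity : (0:ℝ) ≤ x * Real.exp (-x))]
    calc x * Real.exp (-x) < Real.exp (x - 1 + -x) := h2
      _ = Real.exp (-1) := by ring_nf
  have hF : AnalyticOnNhd ℝ (fun x : ℝ => p.sum (x * Real.exp (-x))) (Set.Ioo (0:ℝ) 1) := by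
    intro x hx
    have h1 : AnalyticAt ℝ (fun x : ℝ => x * Real.exp (-x)) x :=
      analyticAt_id.mul (analyticAt_id.neg.rexp)
    exact AnalyticAt.comp (g := p.sum) (f := fun x : ℝ => x * Real.exp (-x))
      (hsum_analytic _ (hmap x hx.1 hx.2)) h1
  have hG : AnalyticOnNhd ℝ (fun x : ℝ => Real.exp (c*x) / (1-x)) (Set.Ioo (0:ℝ) 1) := by
    intro x hx
    exact ((analyticAt_const.mul analyticAt_id).rexp).div
      (analyticAt_const.sub analyticAt_id) (sub_ne_zero.mpr (by linarith [hx.2]))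
  have hpsum : ∀ t : ℝ, p.sum t = ∑' m : ℕ, a m * t^m := by
    intro t
    refine tsum_congr fun n => ?_
    rw [hp_def, FormalMultilinearSeries.ofScalars_apply_eq, smul_eq_mul]
  have hev : (fun x : ℝ => p.sum (x * Real.exp (-x)))
      =ᶠ[nhds (1/16 : ℝ)] (fun x : ℝ => Real.exp (c*x) / (1-x)) := by
    filter_upwards [Ioo_mem_nhds (by norm_num : (0:ℝ) < 1/16) (by norm_num : (1/16:ℝ) < 1/8)]
      with x hx
    rw [hpsum]
    exact small c x hc hx.1 hx.2.le
  have heq := hF.eqOn_of_preconnected_of_eventuallyEq hG isPreconnected_Ioo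
    (by constructor <;> norm_num : (1/16 : ℝ) ∈ Set.Ioo (0:ℝ) 1) hev
  have := heq hl
  simpa only [hpsum, ha_def] using this

theorem stmt7 (θ lam : ℝ) (hθ : 0 < θ) (hlam : lam ∈ Set.Ioo (0 : ℝ) 1) :
    ∑' n : ℕ, (n : ℝ) * (θ * (θ + lam * n) ^ ((n : ℤ) - 1) / n.factorial *
        Real.exp (-(θ + lam * n)))
    = θ / (1 - lam) := by
  obtain ⟨hl0, hl1⟩ := hlam
  set g : ℕ → ℝ := fun n => (n : ℝ) * (θ * (θ + lam * n) ^ ((n : ℤ) - 1) / n.factorial *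
    Real.exp (-(θ + lam * n))) with hg_def
  set c : ℝ := (θ + lam)/lam with hc_def
  have hc : 0 < c := div_pos (by linarith) hl0
  have hcl : c * lam = θ + lam := by
    rw [hc_def]; field_simp
  have hre : ∑' m : ℕ, g (m+1) = ∑' n : ℕ, g n := by
    apply Function.Injective.tsum_eq (add_left_injective 1)
    intro x hx
    rcases Nat.eq_zero_or_pos x with h0 | hpos
    · exfalso
      apply hx
      rw [hg_def, h0]
      simp
    · refine ⟨x - 1, ?_⟩
      show x - 1 + 1 = x
      omega
  have hterm : ∀ m : ℕ, g (m+1)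
      = (θ * Real.exp (-(θ+lam))) * ((c+m)^m / m.factorial * (lam * Real.exp (-lam))^m) := by
    intro m
    have hfac : (((m+1).factorial : ℕ) : ℝ) = (m+1) * m.factorial := by
      rw [Nat.factorial_succ]; push_cast; ring
    have hbase : θ + lam*((m:ℝ)+1) = lam*(c+m) := by
      rw [hc_def]; field_simp; ring
    have hexp : Real.exp (-(θ + lam*((m:ℝ)+1))) = Real.exp (-(θ+lam)) * Real.exp (-lam)^m := by
      rw [← Real.exp_nat_mul, ← Real.exp_add]; congr 1; ring
    rw [hg_def]
    simp only
    push_cast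
    rw [show ((m:ℤ) + 1 - 1) = (m:ℤ) by ring, zpow_natCast, hexp, hbase, hfac, mul_pow lam, mul_pow lam (Real.exp (-lam))]
    have hm1 : ((m:ℝ)+1) ≠ 0 := by positivity
    have hmf : ((m.factorial : ℕ) : ℝ) ≠ 0 := Nat.cast_ne_zero.mpr m.factorial_ne_zero
    field_simp
  have hfinal : ∑' m : ℕ, g (m+1) = θ / (1 - lam) := by
    rw [tsum_congr hterm, tsum_mul_left, core c lam hc ⟨hl0, hl1⟩, hcl, Real.exp_neg]
    have h1l : (1:ℝ) - lam ≠ 0 := sub_ne_zero.mpr (by linarith)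
    field_simp
  rw [← hre] at *
  exact hfinal
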